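/- Let L : List Bool be a Boolean string of length m, let n < m, and let e(n,m) = List.replicate n false ++ [true] ++ List.replicate (m − 1 − n) false be the length-m string with a single one at position n. If the character of L at position n is true, then the Levenshtein edit distance with unit costs between L and e(n,m) equals L.count true − 1. -/

import Mathlib

/-- Cost structure for the Levenshtein edit distance (as in Mathlib, December 2024). -/
structure Levenshtein.Cost (α β δ : Type*) where
  /-- Cost to delete an element from a list. -/
  delete : α → δ
  /-- Cost in insert an element into a list. -/
  insert : β → δ
  /-- Cost to substitute one element for another in a list. -/
  substitute : α → β → δ

/-- The default cost structure, for which all operations cost `1`. -/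
def Levenshtein.defaultCost {α : Type*} [DecidableEq α] : Levenshtein.Cost α α ℕ where
  delete _ := 1
  insert _ := 1
  substitute a b := if a = b then 0 else 1

namespace Levenshtein

/-- (Implementation detail of `suffixLevenshtein`.) -/
def impl {α β δ : Type*} [AddZeroClass δ] [Min δ] (C : Levenshtein.Cost α β δ)
    (xs : List α) (y : β) (d : {r : List δ // 0 < r.length}) : {r : List δ // 0 < r.length} :=
  let ⟨ds, w⟩ := d
  xs.zip (ds.zip ds.tail) |>.foldr
    (init := ⟨[C.insert y + ds.getLast (List.length_pos_iff.mp w)], by simp⟩)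
    (fun ⟨x, d₀, d₁⟩ ⟨r, w⟩ =>
      ⟨min (C.delete x + r[0]) (min (C.insert y + d₀) (C.substitute x y + d₁)) :: r, by simp⟩)

end Levenshtein

/-- `suffixLevenshtein C xs ys` computes the Levenshtein distance
(using the cost functions provided by a `C : Cost α β δ`)
from each suffix of the list `xs` to the list `ys`. -/
def suffixLevenshtein {α β δ : Type*} [AddZeroClass δ] [Min δ] (C : Levenshtein.Cost α β δ)
    (xs : List α) (ys : List β) : {r : List δ // 0 < r.length} :=
  ys.foldr
    (Levenshtein.impl C xs)
    (xs.foldr (init := ⟨[0], by simp⟩) (fun a ⟨r, w⟩ => ⟨(C.delete a + r[0]) :: r, by simp⟩))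

/-- `levenshtein C xs ys` computes the Levenshtein distance
(using the cost functions provided by a `C : Cost α β δ`)
from the list `xs` to the list `ys`. -/
def levenshtein {α β δ : Type*} [AddZeroClass δ] [Min δ] (C : Levenshtein.Cost α β δ)
    (xs : List α) (ys : List β) : δ :=
  let ⟨r, w⟩ := suffixLevenshtein C xs ys
  r[0]


namespace Levenshtein

@[simp]
theorem defaultCost_delete {α : Type*} [DecidableEq α] (a : α) :
    (Levenshtein.defaultCost (α := α)).delete a = 1 := rfl

@[simp]
theorem defaultCost_insert {α : Type*} [DecidableEq α] (a : α) :
    (Levenshtein.defaultCost (α := α)).insert a = 1 := rfl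

@[simp]
theorem defaultCost_substitute {α : Type*} [DecidableEq α] (a b : α) :
    (Levenshtein.defaultCost (α := α)).substitute a b = if a = b then 0 else 1 := rfl

theorem impl_cons {α β δ : Type*} [AddZeroClass δ] [Min δ] (C : Levenshtein.Cost α β δ)
    (x : α) (xs : List α) (y : β) (d : δ) (ds : List δ) (w : 0 < (d :: ds).length)
    (w' : 0 < List.length ds) :
    impl C (x :: xs) y ⟨d :: ds, w⟩ =
      let ⟨r, w⟩ := impl C xs y ⟨ds, w'⟩
      ⟨min (C.delete x + r[0]) (min (C.insert y + d) (C.substitute x y + ds[0])) :: r, by simp⟩ :=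
  match ds, w' with | _ :: _, _ => rfl

theorem impl_cons_fst_zero {α β δ : Type*} [AddZeroClass δ] [Min δ] (C : Levenshtein.Cost α β δ)
    (x : α) (xs : List α) (y : β) (d : δ) (ds : List δ) (w : 0 < (d :: ds).length)
    (h) (w' : 0 < List.length ds) :
    (impl C (x :: xs) y ⟨d :: ds, w⟩).1[0]'h =
      let ⟨r, w⟩ := impl C xs y ⟨ds, w'⟩
      min (C.delete x + r[0]) (min (C.insert y + d) (C.substitute x y + ds[0])) :=
  match ds, w' with | _ :: _, _ => rfl

theorem impl_length {α β δ : Type*} [AddZeroClass δ] [Min δ] (C : Levenshtein.Cost α β δ)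
    (xs : List α) (y : β)
    (d : {r : List δ // 0 < r.length}) (w : d.1.length = xs.length + 1) :
    (impl C xs y d).1.length = xs.length + 1 := by
  induction xs generalizing d with
  | nil => rfl
  | cons x xs ih =>
    dsimp [impl]
    match d, w with
    | ⟨d₁ :: d₂ :: ds, _⟩, w =>
      dsimp
      congr 1
      exact ih ⟨d₂ :: ds, (by simp)⟩ (by simpa using w)

end Levenshtein

open Levenshtein

theorem suffixLevenshtein_length {α β δ : Type*} [AddZeroClass δ] [Min δ]
    (C : Levenshtein.Cost α β δ) (xs : List α) (ys : List β) :
    (suffixLevenshtein C xs ys).1.length = xs.length + 1 := by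
  induction ys with
  | nil =>
    dsimp [suffixLevenshtein]
    induction xs with
    | nil => rfl
    | cons _ xs ih =>
      simp_all
  | cons y ys ih =>
    dsimp [suffixLevenshtein]
    rw [impl_length]
    exact ih

theorem suffixLevenshtein_cons₂ {α β δ : Type*} [AddZeroClass δ] [Min δ]
    (C : Levenshtein.Cost α β δ) (xs : List α) (y : β) (ys : List β) :
    suffixLevenshtein C xs (y :: ys) = (impl C xs) y (suffixLevenshtein C xs ys) :=
  rfl

theorem suffixLevenshtein_cons₁_aux {α} {x y : {r : List α // 0 < r.length}}
    (w₀ : x.1[0]'x.2 = y.1[0]'y.2) (w : x.1.tail = y.1.tail) : x = y := by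
  match x, y with
  | ⟨hx :: tx, _⟩, ⟨hy :: ty, _⟩ => simp_all

theorem suffixLevenshtein_cons₁ {α β δ : Type*} [AddZeroClass δ] [Min δ]
    (C : Levenshtein.Cost α β δ) (x : α) (xs : List α) (ys : List β) :
    suffixLevenshtein C (x :: xs) ys =
      ⟨levenshtein C (x :: xs) ys ::
        (suffixLevenshtein C xs ys).1, by simp⟩ := by
  induction ys with
  | nil =>
    rfl
  | cons y ys ih =>
    apply suffixLevenshtein_cons₁_aux
    · rfl
    · rw [suffixLevenshtein_cons₂ C (x :: xs), ih, impl_cons]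
      · rfl
      · simp [suffixLevenshtein_length]

theorem suffixLevenshtein_cons_cons_fst_get_zero {α β δ : Type*} [AddZeroClass δ] [Min δ]
    (C : Levenshtein.Cost α β δ) (x : α) (xs : List α) (y : β) (ys : List β) (w) :
    (suffixLevenshtein C (x :: xs) (y :: ys)).1[0]'w =
      let ⟨dx, _⟩ := suffixLevenshtein C xs (y :: ys)
      let ⟨dy, _⟩ := suffixLevenshtein C (x :: xs) ys
      let ⟨dxy, _⟩ := suffixLevenshtein C xs ys
      min
        (C.delete x + dx[0])
        (min
          (C.insert y + dy[0])
          (C.substitute x y + dxy[0])) := by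
  conv =>
    lhs
    dsimp only [suffixLevenshtein_cons₂]
  simp only [suffixLevenshtein_cons₁]
  rw [impl_cons_fst_zero]
  rfl

@[simp]
theorem levenshtein_nil_nil {α β δ : Type*} [AddZeroClass δ] [Min δ]
    (C : Levenshtein.Cost α β δ) : levenshtein C ([] : List α) ([] : List β) = 0 :=
  rfl

@[simp]
theorem levenshtein_cons_nil {α β δ : Type*} [AddZeroClass δ] [Min δ]
    (C : Levenshtein.Cost α β δ) (x : α) (xs : List α) :
    levenshtein C (x :: xs) ([] : List β) = C.delete x + levenshtein C xs ([] : List β) :=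
  rfl

@[simp]
theorem levenshtein_cons_cons {α β δ : Type*} [AddZeroClass δ] [Min δ]
    (C : Levenshtein.Cost α β δ) (x : α) (xs : List α) (y : β) (ys : List β) :
    levenshtein C (x :: xs) (y :: ys) =
      min (C.delete x + levenshtein C xs (y :: ys))
        (min (C.insert y + levenshtein C (x :: xs) ys)
          (C.substitute x y + levenshtein C xs ys)) :=
  suffixLevenshtein_cons_cons_fst_get_zero ..

private lemma lev_lower (xs : List Bool) : ∀ ys : List Bool,
    xs.count true - ys.count true ≤ levenshtein Levenshtein.defaultCost xs ys := by
  induction xs with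
  | nil => intro ys; simp
  | cons x xs ihx =>
    intro ys
    induction ys with
    | nil =>
      have := ihx []
      simp only [List.count_nil] at this ⊢
      simp only [levenshtein_cons_nil, Levenshtein.defaultCost_delete]
      have hc : (x :: xs).count true ≤ xs.count true + 1 := by
        rcases x <;> simp [List.count_cons]
      omega
    | cons y ys ihy =>
      have h1 := ihx (y :: ys)
      have h2 := ihx ys
      rw [levenshtein_cons_cons, le_min_iff, le_min_iff]
      rcases x <;> rcases y <;>
        simp [List.count_cons] at h1 h2 ihy ⊢ <;> omega

private lemma lev_rep (xs : List Bool) :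
    levenshtein Levenshtein.defaultCost xs (List.replicate xs.length false) ≤ xs.count true := by
  induction xs with
  | nil => simp
  | cons x xs ih =>
    rw [List.length_cons, List.replicate_succ, levenshtein_cons_cons]
    refine le_trans (le_trans (min_le_right _ _) (min_le_right _ _)) ?_
    have hc : Levenshtein.defaultCost.substitute x false = if x = true then 1 else 0 := by
      rcases x <;> simp [Levenshtein.defaultCost]
    rw [hc]
    rcases x <;> simp [List.count_cons] <;> omega

private lemma lev_upper : ∀ (n : ℕ) (L : List Bool) (hn : n < L.length),
    L.get ⟨n, hn⟩ = true →
    levenshtein Levenshtein.defaultCost L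
        (List.replicate n false ++ [true] ++ List.replicate (L.length - 1 - n) false) ≤
      L.count true - 1 := by
  intro n
  induction n with
  | zero =>
    rintro (_ | ⟨b, L⟩) hn h
    · simp at hn
    · simp only [List.get_eq_getElem, List.getElem_cons_zero] at h
      subst h
      simp only [List.replicate_zero, List.nil_append, List.length_cons,
        Nat.add_sub_cancel, Nat.sub_zero, List.singleton_append, levenshtein_cons_cons]
      refine le_trans (le_trans (min_le_right _ _) (min_le_right _ _)) ?_
      have : Levenshtein.defaultCost.substitute true true = 0 := by
        simp [Levenshtein.defaultCost]
      rw [this, zero_add]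
      have := lev_rep L
      simp [List.count_cons]
      omega
  | succ n ih =>
    rintro (_ | ⟨b, L⟩) hn h
    · simp at hn
    · simp only [List.length_cons, Nat.add_lt_add_iff_right] at hn
      simp only [List.get_eq_getElem, List.getElem_cons_succ] at h
      have hL1 : 1 ≤ L.count true :=
        List.count_pos_iff.mpr (h ▸ List.getElem_mem hn)
      have ihL := ih L hn (by simpa using h)
      have hlen : (b :: L).length - 1 - (n + 1) = L.length - 1 - n := by
        simp; omega
      rw [hlen, List.replicate_succ]
      simp only [List.cons_append, levenshtein_cons_cons]
      refine le_trans (le_trans (min_le_right _ _) (min_le_right _ _)) ?_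
      have hc : Levenshtein.defaultCost.substitute b false = if b = true then 1 else 0 := by
        rcases b <;> simp [Levenshtein.defaultCost]
      rw [hc]
      rcases b <;> simp [List.count_cons] at ihL ⊢ <;> omega

/-- If `L` has length `m`, `n < m` and the character of `L` at position `n` is
`true`, then the Levenshtein distance (unit costs) between `L` and the length-`m`
string with a single one at position `n` is `L.count true - 1`. -/
theorem levenshtein_single_one_of_true (m n : ℕ) (L : List Bool)
    (hL : L.length = m) (hn : n < m)
    (h : L.get ⟨n, by omega⟩ = true) :
    levenshtein Levenshtein.defaultCost L
        (List.replicate n false ++ [true] ++ List.replicate (m - 1 - n) false) =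
      L.count true - 1 := by
  subst hL
  have hupper := lev_upper n L hn h
  have hlower := lev_lower L (List.replicate n false ++ [true] ++ List.replicate (L.length - 1 - n) false)
  have hcount : (List.replicate n false ++ [true] ++ List.replicate (L.length - 1 - n) false).count true = 1 := by
    simp [List.count_append, List.count_replicate]
  rw [hcount] at hlower
  omega
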